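/- arXiv:1902.04104 — 2 statements merged into one kernel-verified Lean document; each statement's English description precedes it below -/
import Mathlib

section
/- Negligible middle-time occupation for the Brownian bridge: let d ≥ 3, let V: ℝ^d → [0,∞) be bounded, measurable and compactly supported, and fix a > 0. Let (T_n) and (m_n) be sequences with T_n → ∞, m_n → ∞, m_n ≤ T_n/2 and m_n/T_n → 0. Then P(∫_{m_n}^{T_n − m_n} V(√2 X^{(T_n)}_s) ds > a) → 0 as n → ∞. -/
open MeasureTheory ProbabilityTheory Filter ENNReal
open scoped NNReal

noncomputable section

/-- Extended-real exponential: `expENN a = exp a` for finite `a`, and `expENN ∞ = ∞`. -/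
def expENN (a : ℝ≥0∞) : ℝ≥0∞ :=
  if a = ∞ then ∞ else ENNReal.ofReal (Real.exp a.toReal)

/-- A standard `d`-dimensional Brownian motion started at `0` under the probability
measure `P`: an a.s. continuous process with `W 0 = 0` a.s., with independent increments,
such that for `0 ≤ s ≤ t` the increment `W t - W s` is a centered Gaussian vector with
covariance `(t - s) · Id`, i.e. its coordinates are independent centered real Gaussians
of variance `t - s`. -/
structure IsBrownianMotion {Ω : Type*} [MeasurableSpace Ω] (d : ℕ)
    (P : Measure Ω) (W : ℝ → Ω → EuclideanSpace ℝ (Fin d)) : Prop where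
  isProb : IsProbabilityMeasure P
  meas : ∀ s : ℝ, Measurable (W s)
  cont : ∀ᵐ ω ∂P, Continuous fun s => W s ω
  init : ∀ᵐ ω ∂P, W 0 ω = 0
  indep_incr : ∀ (n : ℕ) (t : Fin (n + 1) → ℝ), Monotone t → 0 ≤ t 0 →
    iIndepFun
      (fun i : Fin n => fun ω => W (t i.succ) ω - W (t i.castSucc) ω) P
  gauss_incr : ∀ s t : ℝ, 0 ≤ s → s ≤ t → ∀ i : Fin d,
    Measure.map (fun ω => (W t ω - W s ω) i) P = gaussianReal 0 (Real.toNNReal (t - s))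
  coord_indep : ∀ s t : ℝ, 0 ≤ s → s ≤ t →
    iIndepFun (fun i : Fin d => fun ω => (W t ω - W s ω) i) P

section Aux

lemma gauss_Icc_le (v : ℝ≥0) (hv : v ≠ 0) (lo hi : ℝ) :
    gaussianReal 0 v (Set.Icc lo hi) ≤ ENNReal.ofReal ((hi - lo) / Real.sqrt v) := by
  rcases lt_or_ge hi lo with h | h
  · rw [Set.Icc_eq_empty (not_le.mpr h)]; simp
  · have hv0 : (0 : ℝ) < (v : ℝ) := by positivity
    have hpdf : ∀ x : ℝ, gaussianPDF 0 v x ≤ ENNReal.ofReal ((Real.sqrt v)⁻¹) := by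
      intro x
      rw [gaussianPDF]
      apply ENNReal.ofReal_le_ofReal
      rw [gaussianPDFReal]
      have h1 : Real.exp (-(x - 0) ^ 2 / (2 * (v:ℝ))) ≤ 1 := by
        rw [Real.exp_le_one_iff]
        apply div_nonpos_of_nonpos_of_nonneg
        · simp [sq_nonneg]
        · positivity
      have h2 : Real.sqrt v ≤ Real.sqrt (2 * Real.pi * v) := by
        apply Real.sqrt_le_sqrt
        nlinarith [Real.pi_gt_three]
      calc (Real.sqrt (2 * Real.pi * v))⁻¹ * Real.exp (-(x - 0) ^ 2 / (2 * (v:ℝ)))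
          ≤ (Real.sqrt (2 * Real.pi * v))⁻¹ * 1 := by
            apply mul_le_mul_of_nonneg_left h1 (by positivity)
        _ = (Real.sqrt (2 * Real.pi * v))⁻¹ := mul_one _
        _ ≤ (Real.sqrt v)⁻¹ := by
            apply inv_anti₀ (Real.sqrt_pos.mpr hv0) h2
    rw [gaussianReal_apply _ hv]
    calc ∫⁻ x in Set.Icc lo hi, gaussianPDF 0 v x
        ≤ ∫⁻ _ in Set.Icc lo hi, ENNReal.ofReal ((Real.sqrt v)⁻¹) :=
          lintegral_mono hpdf
      _ = ENNReal.ofReal ((Real.sqrt v)⁻¹) * volume (Set.Icc lo hi) := setLIntegral_const _ _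
      _ = ENNReal.ofReal ((Real.sqrt v)⁻¹) * ENNReal.ofReal (hi - lo) := by
          rw [Real.volume_Icc]
      _ = ENNReal.ofReal ((hi - lo) / Real.sqrt v) := by
          rw [← ENNReal.ofReal_mul (by positivity), inv_mul_eq_div]

lemma key_prob_bound {Ω : Type*} [MeasurableSpace Ω] {P : Measure Ω} [IsProbabilityMeasure P]
    {d : ℕ} (hd : 3 ≤ d)
    (A B : Ω → EuclideanSpace ℝ (Fin d)) (hA : Measurable A) (hB : Measurable B)
    (v : ℝ≥0) (hv : v ≠ 0)
    (hAcoord : ∀ i, Measure.map (fun ω => A ω i) P = gaussianReal 0 v)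
    (hAindep : iIndepFun (fun i : Fin d => fun ω => A ω i) P)
    (hBA : IndepFun B A P)
    (α β R : ℝ) (hα : (1:ℝ)/2 ≤ |α|) (hR : 0 ≤ R) :
    P {ω | ∀ i, |α * A ω i + β * B ω i| ≤ R}
      ≤ (ENNReal.ofReal (4 * R / Real.sqrt v)) ^ 3 := by
  have hα0 : α ≠ 0 := by
    intro h; rw [h] at hα; simp at hα; linarith
  have hαpos : (0:ℝ) < |α| := abs_pos.mpr hα0
  set c : ℝ≥0∞ := ENNReal.ofReal (4 * R / Real.sqrt v) with hc
  have hcoordMeas : ∀ i : Fin d, Measurable fun x : EuclideanSpace ℝ (Fin d) => x i :=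
    fun i => by fun_prop
  set S : Set (EuclideanSpace ℝ (Fin d) × EuclideanSpace ℝ (Fin d)) :=
    {p | ∀ i, |α * p.2 i + β * p.1 i| ≤ R} with hS
  have hSmeas : MeasurableSet S := by
    have : S = ⋂ i, {p : EuclideanSpace ℝ (Fin d) × EuclideanSpace ℝ (Fin d) |
        |α * p.2 i + β * p.1 i| ≤ R} := by
      ext p; simp [hS, Set.mem_iInter]
    rw [this]
    refine MeasurableSet.iInter fun i => ?_
    have hm : Measurable fun p : EuclideanSpace ℝ (Fin d) × EuclideanSpace ℝ (Fin d) =>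
        |α * p.2 i + β * p.1 i| :=
      ((((hcoordMeas i).comp measurable_snd).const_mul α).add
        (((hcoordMeas i).comp measurable_fst).const_mul β)).abs
    exact measurableSet_le hm measurable_const
  haveI : IsProbabilityMeasure (P.map A) := Measure.isProbabilityMeasure_map hA.aemeasurable
  haveI : IsProbabilityMeasure (P.map B) := Measure.isProbabilityMeasure_map hB.aemeasurable
  have key_eq : P {ω | ∀ i, |α * A ω i + β * B ω i| ≤ R} = ((P.map B).prod (P.map A)) S := by
    have hmap : Measure.map (fun ω => (B ω, A ω)) P = (P.map B).prod (P.map A) :=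
      (indepFun_iff_map_prod_eq_prod_map_map hB.aemeasurable hA.aemeasurable).mp hBA
    rw [← hmap, Measure.map_apply (hB.prodMk hA) hSmeas]
    rfl
  rw [key_eq, Measure.prod_apply hSmeas]
  have hslice : ∀ b : EuclideanSpace ℝ (Fin d), (P.map A) (Prod.mk b ⁻¹' S) ≤ c ^ 3 := by
    intro b
    set r : ℝ := R / |α| with hr
    have hr0 : 0 ≤ r := div_nonneg hR hαpos.le
    set lo : Fin d → ℝ := fun i => -(β * b i) / α - r
    set hi : Fin d → ℝ := fun i => -(β * b i) / α + r
    have hsub : Prod.mk b ⁻¹' S ⊆ ⋂ i, (fun x : EuclideanSpace ℝ (Fin d) => x i) ⁻¹' Set.Icc (lo i) (hi i) := by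
      intro x hx
      simp only [Set.mem_iInter, Set.mem_preimage, Set.mem_Icc]
      intro i
      have hxi : |α * x i + β * b i| ≤ R := hx i
      have habs : |x i + (β * b i) / α| ≤ r := by
        have heq : x i + (β * b i) / α = (α * x i + β * b i) / α := by
          field_simp
        rw [heq, abs_div, hr]
        gcongr
      have h2 := abs_le.mp habs
      have h3 : -(β * b i) / α = -(β * b i / α) := by ring
      constructor <;> simp only [lo, hi] <;> rw [h3] <;> linarith [h2.1, h2.2]
    have hIccMeas : MeasurableSet (⋂ i, (fun x : EuclideanSpace ℝ (Fin d) => x i) ⁻¹' Set.Icc (lo i) (hi i)) :=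
      MeasurableSet.iInter fun i => (hcoordMeas i) measurableSet_Icc
    calc (P.map A) (Prod.mk b ⁻¹' S)
        ≤ (P.map A) (⋂ i, (fun x : EuclideanSpace ℝ (Fin d) => x i) ⁻¹' Set.Icc (lo i) (hi i)) :=
          measure_mono hsub
      _ = P (⋂ i, (fun ω => A ω i) ⁻¹' Set.Icc (lo i) (hi i)) := by
          rw [Measure.map_apply hA hIccMeas]
          congr 1
          ext ω; simp
      _ = ∏ i : Fin d, P ((fun ω => A ω i) ⁻¹' Set.Icc (lo i) (hi i)) := by
          have hprod := hAindep.measure_inter_preimage_eq_mul (S := Finset.univ)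
            (sets := fun i => Set.Icc (lo i) (hi i)) (fun i _ => measurableSet_Icc)
          have huniv : (⋂ i ∈ Finset.univ, (fun ω => A ω i) ⁻¹' Set.Icc (lo i) (hi i))
              = ⋂ i, (fun ω => A ω i) ⁻¹' Set.Icc (lo i) (hi i) := by simp
          rw [← huniv, hprod]
      _ ≤ ∏ _i : Fin d, min 1 c := by
          refine Finset.prod_le_prod' fun i _ => le_min prob_le_one ?_
          have hmeq : P ((fun ω => A ω i) ⁻¹' Set.Icc (lo i) (hi i))
              = gaussianReal 0 v (Set.Icc (lo i) (hi i)) := by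
            rw [← hAcoord i]
            exact (Measure.map_apply (show Measurable fun ω => (A ω) i from
              (hcoordMeas i).comp hA) measurableSet_Icc).symm
          rw [hmeq]
          refine (gauss_Icc_le v hv _ _).trans ?_
          apply ENNReal.ofReal_le_ofReal
          have hlen : hi i - lo i = 2 * r := by simp only [lo, hi]; ring
          rw [hlen]
          have h2r : 2 * r ≤ 4 * R := by
            have hinv : |α|⁻¹ ≤ 2 := by
              have := one_div_le_one_div_of_le (by norm_num : (0:ℝ) < 1/2) hα
              simpa using this
            have hmul : R * |α|⁻¹ ≤ R * 2 := mul_le_mul_of_nonneg_left hinv hR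
            rw [hr, div_eq_mul_inv]
            linarith
          gcongr
      _ = (min 1 c) ^ d := by rw [Finset.prod_const, Finset.card_univ, Fintype.card_fin]
      _ ≤ (min 1 c) ^ 3 := pow_le_pow_of_le_one zero_le (min_le_left _ _) hd
      _ ≤ c ^ 3 := pow_le_pow_left₀ zero_le (min_le_right _ _) 3
  calc ∫⁻ b, (P.map A) (Prod.mk b ⁻¹' S) ∂(P.map B)
      ≤ ∫⁻ _, c ^ 3 ∂(P.map B) := lintegral_mono hslice
    _ = c ^ 3 := by simp

lemma bm_event_bound {Ω : Type*} [MeasurableSpace Ω]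
    {d : ℕ} (hd : 3 ≤ d) {P : Measure Ω} {W : ℝ → Ω → EuclideanSpace ℝ (Fin d)}
    (hW : IsBrownianMotion d P W) {s T R : ℝ} (h0s : 0 < s) (hsT : s < T) (hR : 0 ≤ R) :
    P {ω | ∀ i : Fin d, |(W s ω - (s / T) • W T ω) i| ≤ R}
      ≤ (ENNReal.ofReal (4 * R / Real.sqrt (min s (T - s)))) ^ 3 := by
  haveI : IsProbabilityMeasure P := hW.isProb
  have hT0 : 0 < T := h0s.trans hsT
  set A : Ω → EuclideanSpace ℝ (Fin d) := fun ω => W s ω - W 0 ω with hAdef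
  set B : Ω → EuclideanSpace ℝ (Fin d) := fun ω => W T ω - W s ω with hBdef
  have hA : Measurable A := (hW.meas s).sub (hW.meas 0)
  have hB : Measurable B := (hW.meas T).sub (hW.meas s)
  set α : ℝ := 1 - s / T with hαdef
  set β : ℝ := -(s / T) with hβdef
  have hmono : Monotone ![0, s, T] := by
    rw [Fin.monotone_iff_le_succ]
    intro i
    fin_cases i <;> simp [Fin.castSucc, Fin.succ] <;> [exact h0s.le; exact hsT.le]
  have hindep2 := hW.indep_incr 2 ![0, s, T] hmono (by simp)
  have hf0 : (fun ω => W (![0, s, T] (Fin.succ 0)) ω - W (![0, s, T] (Fin.castSucc 0)) ω) = A := by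
    funext ω; simp [hAdef]
  have hf1 : (fun ω => W (![0, s, T] (Fin.succ 1)) ω - W (![0, s, T] (Fin.castSucc 1)) ω) = B := by
    funext ω; simp [hBdef]
  have hAB : IndepFun A B P := by
    have := hindep2.indepFun (i := 0) (j := 1) (by decide)
    rwa [hf0, hf1] at this
  have hBA : IndepFun B A P := hAB.symm
  have hAcoord : ∀ i, Measure.map (fun ω => A ω i) P = gaussianReal 0 (Real.toNNReal s) := by
    intro i
    have := hW.gauss_incr 0 s le_rfl h0s.le i
    simpa [hAdef] using this
  have hBcoord : ∀ i, Measure.map (fun ω => B ω i) P = gaussianReal 0 (Real.toNNReal (T - s)) := by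
    intro i
    exact hW.gauss_incr s T h0s.le hsT.le i
  have hAindep' : iIndepFun (fun i : Fin d => fun ω => A ω i) P :=
    hW.coord_indep 0 s le_rfl h0s.le
  have hBindep' : iIndepFun (fun i : Fin d => fun ω => B ω i) P :=
    hW.coord_indep s T h0s.le hsT.le
  have hcoordeq : ∀ ω, W 0 ω = 0 → ∀ i : Fin d,
      (W s ω - (s / T) • W T ω) i = α * A ω i + β * B ω i := by
    intro ω h0 i
    have h0i : (W 0 ω) i = 0 := by rw [h0]; rfl
    simp only [hAdef, hBdef, hαdef, hβdef, PiLp.sub_apply, PiLp.smul_apply, smul_eq_mul]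
    rw [h0i]
    ring
  have hmeascongr : P {ω | ∀ i : Fin d, |(W s ω - (s / T) • W T ω) i| ≤ R}
      = P {ω | ∀ i : Fin d, |α * A ω i + β * B ω i| ≤ R} := by
    apply measure_congr
    filter_upwards [hW.init] with ω h0
    have : (∀ i : Fin d, |(W s ω - (s / T) • W T ω) i| ≤ R)
        ↔ (∀ i : Fin d, |α * A ω i + β * B ω i| ≤ R) := by
      constructor <;> intro h i <;> [rw [← hcoordeq ω h0 i]; rw [hcoordeq ω h0 i]] <;> exact h i
    exact eq_iff_iff.mpr this
  rw [hmeascongr]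
  rcases le_or_gt s (T / 2) with hhalf | hhalf
  · have hst : s / T ≤ 1 / 2 := by
      rw [div_le_div_iff₀ hT0 (by norm_num)]
      linarith
    have hα2 : (1:ℝ)/2 ≤ |α| := by
      rw [hαdef, abs_of_nonneg (by nlinarith [div_nonneg h0s.le hT0.le])]
      linarith
    have hv : Real.toNNReal s ≠ 0 := ne_of_gt (Real.toNNReal_pos.mpr h0s)
    have hbound := key_prob_bound hd A B hA hB (Real.toNNReal s) hv hAcoord hAindep' hBA α β R hα2 hR
    refine hbound.trans ?_
    have hcoe : ((Real.toNNReal s : ℝ≥0) : ℝ) = s := Real.coe_toNNReal s h0s.le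
    rw [hcoe]
    have hmin : min s (T - s) ≤ s := min_le_left _ _
    refine pow_le_pow_left₀ zero_le (ENNReal.ofReal_le_ofReal ?_) 3
    exact div_le_div_of_nonneg_left (by linarith)
      (Real.sqrt_pos.mpr (lt_min h0s (by linarith))) (Real.sqrt_le_sqrt hmin)
  · have hst : 1 / 2 ≤ s / T := by
      rw [div_le_div_iff₀ (by norm_num) hT0]
      linarith
    have hβ2 : (1:ℝ)/2 ≤ |β| := by
      rw [hβdef, abs_neg, abs_of_nonneg (div_nonneg h0s.le hT0.le)]
      exact hst
    have hv : Real.toNNReal (T - s) ≠ 0 := ne_of_gt (Real.toNNReal_pos.mpr (by linarith))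
    have hevcomm : {ω | ∀ i : Fin d, |α * A ω i + β * B ω i| ≤ R}
        = {ω | ∀ i : Fin d, |β * B ω i + α * A ω i| ≤ R} := by
      ext ω; simp only [Set.mem_setOf_eq]
      constructor <;> intro h i <;> [rw [add_comm]; rw [add_comm]] <;> exact h i
    rw [hevcomm]
    have hbound := key_prob_bound hd B A hB hA (Real.toNNReal (T - s)) hv hBcoord hBindep' hAB β α R hβ2 hR
    refine hbound.trans ?_
    have hcoe : ((Real.toNNReal (T - s) : ℝ≥0) : ℝ) = T - s :=
      Real.coe_toNNReal _ (by linarith)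
    rw [hcoe]
    have hmin : min s (T - s) ≤ T - s := min_le_right _ _
    refine pow_le_pow_left₀ zero_le (ENNReal.ofReal_le_ofReal ?_) 3
    exact div_le_div_of_nonneg_left (by linarith)
      (Real.sqrt_pos.mpr (lt_min h0s (by linarith))) (Real.sqrt_le_sqrt hmin)

lemma sqrt_cube_eq_rpow {s : ℝ} (hs : 0 < s) :
    ((Real.sqrt s)⁻¹) ^ 3 = s ^ (-(3:ℝ)/2) := by
  rw [Real.sqrt_eq_rpow, inv_pow]
  rw [← Real.rpow_natCast (s ^ ((1:ℝ)/2)) 3, ← Real.rpow_mul hs.le]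
  rw [← Real.rpow_neg hs.le]
  norm_num

lemma int_sqrt_Ioi {m : ℝ} (hm : 0 < m) :
    ∫⁻ s in Set.Ioi m, ENNReal.ofReal (((Real.sqrt s)⁻¹) ^ 3)
      = ENNReal.ofReal (2 * m ^ (-(1:ℝ)/2)) := by
  have hcongr : ∫⁻ s in Set.Ioi m, ENNReal.ofReal (((Real.sqrt s)⁻¹) ^ 3)
      = ∫⁻ s in Set.Ioi m, ENNReal.ofReal (s ^ (-(3:ℝ)/2)) := by
    refine setLIntegral_congr_fun measurableSet_Ioi (fun s hs => ?_)
    rw [sqrt_cube_eq_rpow (hm.trans hs)]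
  rw [hcongr]
  have hint : IntegrableOn (fun t : ℝ => t ^ (-(3:ℝ)/2)) (Set.Ioi m) :=
    integrableOn_Ioi_rpow_of_lt (by norm_num) hm
  rw [← ofReal_integral_eq_lintegral_ofReal hint ?_]
  · congr 1
    rw [integral_Ioi_rpow_of_lt (by norm_num) hm]
    norm_num
    ring
  · filter_upwards [ae_restrict_mem measurableSet_Ioi] with x hx
    exact Real.rpow_nonneg (hm.trans hx).le _

lemma time_int_bound {m T : ℝ} (hm : 0 < m) (hmT : m ≤ T - m) :
    ∫⁻ s in Set.Ioc m (T - m),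
        (ENNReal.ofReal (((Real.sqrt s)⁻¹) ^ 3)
          + ENNReal.ofReal (((Real.sqrt (T - s))⁻¹) ^ 3))
      ≤ ENNReal.ofReal (4 * m ^ (-(1:ℝ)/2)) := by
  have hmeas1 : Measurable fun s : ℝ => ENNReal.ofReal (((Real.sqrt s)⁻¹) ^ 3) :=
    ((Real.continuous_sqrt.measurable.inv).pow_const 3).ennreal_ofReal
  rw [lintegral_add_left hmeas1]
  have h1 : ∫⁻ s in Set.Ioc m (T - m), ENNReal.ofReal (((Real.sqrt s)⁻¹) ^ 3)
      ≤ ENNReal.ofReal (2 * m ^ (-(1:ℝ)/2)) := by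
    rw [← int_sqrt_Ioi hm]
    exact lintegral_mono_set Set.Ioc_subset_Ioi_self
  have h2 : ∫⁻ s in Set.Ioc m (T - m), ENNReal.ofReal (((Real.sqrt (T - s))⁻¹) ^ 3)
      ≤ ENNReal.ofReal (2 * m ^ (-(1:ℝ)/2)) := by
    have hmp : MeasurePreserving (fun x : ℝ => T - x) volume volume := by
      have h1' := measurePreserving_add_left (volume : Measure ℝ) T
      have h2' := Measure.measurePreserving_neg (volume : Measure ℝ)
      simpa [Function.comp_def, sub_eq_add_neg] using h1'.comp h2'
    have hemb : MeasurableEmbedding (fun x : ℝ => T - x) :=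
      (Homeomorph.subLeft T).measurableEmbedding
    have hpre : (fun x : ℝ => T - x) ⁻¹' Set.Ico m (T - m) = Set.Ioc m (T - m) := by
      ext x
      simp only [Set.mem_preimage, Set.mem_Ico, Set.mem_Ioc]
      constructor <;> intro h <;> constructor <;> linarith [h.1, h.2]
    have hrefl := hmp.setLIntegral_comp_preimage_emb hemb
      (fun u => ENNReal.ofReal (((Real.sqrt u)⁻¹) ^ 3)) (Set.Ico m (T - m))
    rw [hpre] at hrefl
    rw [hrefl]
    calc ∫⁻ u in Set.Ico m (T - m), ENNReal.ofReal (((Real.sqrt u)⁻¹) ^ 3)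
        ≤ ∫⁻ u in Set.Ici m, ENNReal.ofReal (((Real.sqrt u)⁻¹) ^ 3) :=
          lintegral_mono_set Set.Ico_subset_Ici_self
      _ = ∫⁻ u in Set.Ioi m, ENNReal.ofReal (((Real.sqrt u)⁻¹) ^ 3) := by
          rw [Measure.restrict_congr_set (Ioi_ae_eq_Ici (a := m)).symm]
      _ = ENNReal.ofReal (2 * m ^ (-(1:ℝ)/2)) := int_sqrt_Ioi hm
  calc _ ≤ ENNReal.ofReal (2 * m ^ (-(1:ℝ)/2)) + ENNReal.ofReal (2 * m ^ (-(1:ℝ)/2)) :=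
        add_le_add h1 h2
    _ = ENNReal.ofReal (4 * m ^ (-(1:ℝ)/2)) := by
        rw [← ENNReal.ofReal_add (by positivity) (by positivity)]
        ring_nf

lemma abs_coord_le_norm {d : ℕ} (x : EuclideanSpace ℝ (Fin d)) (i : Fin d) : |x i| ≤ ‖x‖ := by
  rw [EuclideanSpace.norm_eq x]
  have h : |x i| = Real.sqrt (‖x i‖^2) := by
    rw [Real.sqrt_sq_eq_abs]; simp
  rw [h]
  apply Real.sqrt_le_sqrt
  exact Finset.single_le_sum (f := fun j => ‖x j‖^2) (fun j _ => by positivity) (Finset.mem_univ i)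

lemma min_cube_bound {s t R : ℝ} (hs : 0 < s) (ht : 0 < t) (hR : 0 ≤ R) :
    (ENNReal.ofReal (4 * R / Real.sqrt (min s t))) ^ 3
      ≤ ENNReal.ofReal ((4*R)^3)
          * (ENNReal.ofReal (((Real.sqrt s)⁻¹) ^ 3) + ENNReal.ofReal (((Real.sqrt t)⁻¹) ^ 3)) := by
  have key : ∀ u : ℝ, 0 < u →
      (ENNReal.ofReal (4 * R / Real.sqrt u)) ^ 3
        = ENNReal.ofReal ((4*R)^3) * ENNReal.ofReal (((Real.sqrt u)⁻¹) ^ 3) := by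
    intro u hu
    rw [← ENNReal.ofReal_pow (by positivity)]
    rw [div_eq_mul_inv, mul_pow, ← ENNReal.ofReal_mul (by positivity)]
  rcases le_total s t with h | h
  · rw [min_eq_left h, key s hs]
    exact mul_le_mul_right le_self_add _
  · rw [min_eq_right h, key t ht]
    exact mul_le_mul_right le_add_self _

end Aux

/-- **Negligible middle-time occupation for the Brownian bridge**: for `d ≥ 3`,
`V : ℝ^d → [0,∞)` bounded measurable with compact support, `a > 0`, and sequences
`T_n → ∞`, `m_n → ∞` with `m_n ≤ T_n/2` and `m_n/T_n → 0`, the probability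
`P(∫_{m_n}^{T_n − m_n} V (√2 X^{(T_n)}_s) ds > a)` tends to `0`, where
`X^{(T)}_s = W_s − (s/T) W_T` is the Brownian bridge. -/
theorem bridge_middle_occupation_negligible {Ω : Type*} [MeasurableSpace Ω]
    {d : ℕ} (hd : 3 ≤ d)
    (P : Measure Ω) (W : ℝ → Ω → EuclideanSpace ℝ (Fin d))
    (hW : IsBrownianMotion d P W)
    (V : EuclideanSpace ℝ (Fin d) → ℝ)
    (hV_meas : Measurable V) (hV_nonneg : ∀ y, 0 ≤ V y) (hV_bdd : ∃ M : ℝ, ∀ y, V y ≤ M)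
    (hV_supp : HasCompactSupport V)
    (a : ℝ) (ha : 0 < a)
    (T m : ℕ → ℝ)
    (hT : Tendsto T atTop atTop) (hm : Tendsto m atTop atTop)
    (hmT : ∀ n, m n ≤ T n / 2)
    (hratio : Tendsto (fun n => m n / T n) atTop (nhds 0)) :
    Tendsto (fun n =>
        P {ω | a < ∫ s in Set.Ioc (m n) (T n - m n),
            V (Real.sqrt 2 • (W s ω - (s / T n) • W (T n) ω))})
      atTop (nhds (0 : ℝ≥0∞)) := by
  haveI : IsProbabilityMeasure P := hW.isProb
  obtain ⟨M, hM⟩ := hV_bdd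
  have hM0 : 0 ≤ M := le_trans (hV_nonneg 0) (hM 0)
  -- radius of the support
  obtain ⟨R₁, hR₁⟩ := (hV_supp.isBounded).subset_closedBall 0
  set R : ℝ := max R₁ 0 / Real.sqrt 2 with hRdef
  have hR0 : 0 ≤ R := div_nonneg (le_max_right _ _) (Real.sqrt_nonneg 2)
  have hVzero : ∀ x : EuclideanSpace ℝ (Fin d), (∃ i, R < |x i|) → V (Real.sqrt 2 • x) = 0 := by
    rintro x ⟨i, hi⟩
    by_contra hne
    have hmem : Real.sqrt 2 • x ∈ tsupport V :=
      subset_tsupport V (by simpa [Function.mem_support] using hne)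
    have hball : Real.sqrt 2 • x ∈ Metric.closedBall 0 (max R₁ 0) :=
      (hR₁.trans (Metric.closedBall_subset_closedBall (le_max_left _ _))) hmem
    rw [Metric.mem_closedBall, dist_zero_right] at hball
    have hcoord : |(Real.sqrt 2 • x) i| ≤ max R₁ 0 :=
      le_trans (abs_coord_le_norm _ i) hball
    have heq : |(Real.sqrt 2 • x) i| = Real.sqrt 2 * |x i| := by
      simp [PiLp.smul_apply, smul_eq_mul, abs_mul, abs_of_nonneg (Real.sqrt_nonneg 2)]
    rw [heq] at hcoord
    have h2 : (0:ℝ) < Real.sqrt 2 := by positivity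
    have hle : |x i| ≤ R := by
      rw [hRdef, le_div_iff₀ h2]
      linarith [hcoord]
    exact absurd hle (not_le.mpr hi)
  -- continuity modification
  set Scont : Set Ω := (toMeasurable P {ω | ¬ Continuous fun s => W s ω})ᶜ with hSdef
  have hSmeas : MeasurableSet Scont := (measurableSet_toMeasurable _ _).compl
  have hSae : ∀ᵐ ω ∂P, ω ∈ Scont := by
    rw [ae_iff]
    have hset : {ω | ¬ ω ∈ Scont} = toMeasurable P {ω | ¬ Continuous fun s => W s ω} := by
      ext ω; simp [hSdef]
    rw [hset, measure_toMeasurable]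
    exact ae_iff.mp hW.cont
  set W' : ℝ → Ω → EuclideanSpace ℝ (Fin d) := fun s => Scont.indicator (W s) with hW'def
  have hW'meas : ∀ s, Measurable (W' s) := fun s => (hW.meas s).indicator hSmeas
  have hW'eq : ∀ ω ∈ Scont, ∀ s, W' s ω = W s ω := fun ω hω s => Set.indicator_of_mem hω _
  have hW'cont : ∀ ω, Continuous fun s => W' s ω := by
    intro ω
    by_cases hω : ω ∈ Scont
    · have hfun : (fun s => W' s ω) = fun s => W s ω := funext fun s => hW'eq ω hω s
      rw [hfun]
      have : ω ∉ {ω | ¬ Continuous fun s => W s ω} :=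
        fun hc => hω (subset_toMeasurable _ _ hc)
      exact not_not.mp this
    · have hfun : (fun s => W' s ω) = fun _ => 0 :=
        funext fun s => Set.indicator_of_notMem hω _
      rw [hfun]; exact continuous_const
  have hW'joint : Measurable (Function.uncurry W') :=
    measurable_uncurry_of_continuous_of_measurable hW'cont hW'meas
  -- the per-n bound
  have hspec : ∀ n, 1 ≤ m n →
      P {ω | a < ∫ s in Set.Ioc (m n) (T n - m n),
          V (Real.sqrt 2 • (W s ω - (s / T n) • W (T n) ω))}
        ≤ ENNReal.ofReal (M * ((4*R)^3 * (4 * (m n) ^ (-(1:ℝ)/2)))) / ENNReal.ofReal a := by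
    intro n hn
    have hm0 : (0:ℝ) < m n := by linarith
    have hmT2 : m n ≤ T n / 2 := hmT n
    have hTpos : (0:ℝ) < T n := by linarith
    have hmTm : m n ≤ T n - m n := by linarith
    set J : Set ℝ := Set.Ioc (m n) (T n - m n) with hJdef
    set g : ℝ → Ω → ℝ≥0∞ := fun s ω =>
      ENNReal.ofReal (V (Real.sqrt 2 • (W s ω - (s / T n) • W (T n) ω))) with hgdef
    set G : ℝ × Ω → ℝ≥0∞ := fun p =>
      ENNReal.ofReal (V (Real.sqrt 2 • (W' p.1 p.2 - (p.1 / T n) • W' (T n) p.2))) with hGdef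
    have hGmeas : Measurable G := by
      have hsmul : Measurable fun p : ℝ × Ω => (p.1 / T n) • W' (T n) p.2 := by
        have hc : Measurable fun p : ℝ × Ω =>
            ((p.1 / T n, W' (T n) p.2) : ℝ × EuclideanSpace ℝ (Fin d)) :=
          (measurable_fst.div_const (T n)).prodMk ((hW'meas (T n)).comp measurable_snd)
        exact (continuous_smul.measurable).comp hc
      have hX : Measurable fun p : ℝ × Ω => W' p.1 p.2 - (p.1 / T n) • W' (T n) p.2 :=
        hW'joint.sub hsmul
      have hsm2 : Measurable fun p : ℝ × Ω =>
          Real.sqrt 2 • (W' p.1 p.2 - (p.1 / T n) • W' (T n) p.2) :=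
        ((continuous_const_smul (Real.sqrt 2)).measurable).comp hX
      exact (hV_meas.comp hsm2).ennreal_ofReal
    set F' : Ω → ℝ≥0∞ := fun ω => ∫⁻ s in J, G (s, ω) with hF'def
    have hF'meas : Measurable F' := by
      have huncurry : Measurable (Function.uncurry fun ω s => G (s, ω)) :=
        hGmeas.comp measurable_swap
      exact huncurry.lintegral_prod_right
    have hFF' : ∀ ω ∈ Scont, (∫⁻ s in J, g s ω) = F' ω := by
      intro ω hω
      refine lintegral_congr fun s => ?_
      simp only [hgdef, hGdef, hW'eq ω hω]
    -- step 1 : from the real integral to the lintegral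
    have hsub : {ω | a < ∫ s in J, V (Real.sqrt 2 • (W s ω - (s / T n) • W (T n) ω))}
        ⊆ {ω | ENNReal.ofReal a ≤ ∫⁻ s in J, g s ω} := by
      intro ω hω
      simp only [Set.mem_setOf_eq] at hω ⊢
      by_cases hint : IntegrableOn
          (fun s => V (Real.sqrt 2 • (W s ω - (s / T n) • W (T n) ω))) J volume
      · have heq : ENNReal.ofReal (∫ s in J, V (Real.sqrt 2 • (W s ω - (s / T n) • W (T n) ω)))
            = ∫⁻ s in J, g s ω :=
          ofReal_integral_eq_lintegral_ofReal hint (ae_of_all _ fun s => hV_nonneg _)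
        rw [← heq]
        exact ENNReal.ofReal_le_ofReal hω.le
      · rw [integral_undef hint] at hω
        linarith
    -- step 2 : a.e. replace by the modification
    have hcong : P {ω | ENNReal.ofReal a ≤ ∫⁻ s in J, g s ω}
        = P {ω | ENNReal.ofReal a ≤ F' ω} := by
      apply measure_congr
      filter_upwards [hSae] with ω hω
      change (ENNReal.ofReal a ≤ ∫⁻ s in J, g s ω) = (ENNReal.ofReal a ≤ F' ω)
      rw [hFF' ω hω]
    -- step 3 : Markov
    have hane : ENNReal.ofReal a ≠ 0 := by
      simp [ENNReal.ofReal_eq_zero, not_le, ha]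
    have hmarkov : P {ω | ENNReal.ofReal a ≤ F' ω} ≤ (∫⁻ ω, F' ω ∂P) / ENNReal.ofReal a :=
      meas_ge_le_lintegral_div hF'meas.aemeasurable hane ENNReal.ofReal_ne_top
    -- step 4 : Tonelli
    have hswap : ∫⁻ ω, F' ω ∂P = ∫⁻ s in J, ∫⁻ ω, G (s, ω) ∂P := by
      have hmeas : AEMeasurable (Function.uncurry fun ω s => G (s, ω))
          (P.prod (volume.restrict J)) :=
        (hGmeas.comp measurable_swap).aemeasurable
      exact lintegral_lintegral_swap hmeas
    -- step 5-8 : per-time bound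
    have hper : ∀ s ∈ J, (∫⁻ ω, G (s, ω) ∂P)
        ≤ ENNReal.ofReal M * (ENNReal.ofReal ((4*R)^3)
            * (ENNReal.ofReal (((Real.sqrt s)⁻¹) ^ 3)
              + ENNReal.ofReal (((Real.sqrt (T n - s))⁻¹) ^ 3))) := by
      intro s hs
      have h0s : (0:ℝ) < s := lt_trans hm0 hs.1
      have hsT' : s < T n := lt_of_le_of_lt hs.2 (by linarith)
      have hGg : ∫⁻ ω, G (s, ω) ∂P = ∫⁻ ω, g s ω ∂P := by
        refine lintegral_congr_ae ?_
        filter_upwards [hSae] with ω hω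
        simp only [hgdef, hGdef, hW'eq ω hω]
      rw [hGg]
      set E : Set Ω := {ω | ∀ i : Fin d, |(W s ω - (s / T n) • W (T n) ω) i| ≤ R} with hEdef
      have hXmeas : Measurable fun ω => W s ω - (s / T n) • W (T n) ω :=
        (hW.meas s).sub ((hW.meas (T n)).const_smul (s / T n))
      have hEmeas : MeasurableSet E := by
        have hE2 : E = ⋂ i, {ω | |(W s ω - (s / T n) • W (T n) ω) i| ≤ R} := by
          ext ω; simp [hEdef, Set.mem_iInter]
        rw [hE2]
        exact MeasurableSet.iInter fun i =>
          measurableSet_le (((show Measurable fun x : EuclideanSpace ℝ (Fin d) => x i by fun_prop).comp hXmeas).abs) measurable_const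
      have hpt : ∀ ω, g s ω ≤ E.indicator (fun _ => ENNReal.ofReal M) ω := by
        intro ω
        by_cases hω : ω ∈ E
        · rw [Set.indicator_of_mem hω]
          exact ENNReal.ofReal_le_ofReal (hM _)
        · rw [Set.indicator_of_notMem hω]
          have hex : ∃ i, R < |(W s ω - (s / T n) • W (T n) ω) i| := by
            simp only [hEdef, Set.mem_setOf_eq, not_forall, not_le] at hω
            exact hω
          have : g s ω = 0 := by
            simp only [hgdef, hVzero _ hex, ENNReal.ofReal_zero]
          rw [this]
      calc ∫⁻ ω, g s ω ∂P
          ≤ ∫⁻ ω, E.indicator (fun _ => ENNReal.ofReal M) ω ∂P := lintegral_mono hpt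
        _ = ENNReal.ofReal M * P E := by
            rw [lintegral_indicator hEmeas]
            exact setLIntegral_const _ _
        _ ≤ ENNReal.ofReal M * (ENNReal.ofReal (4 * R / Real.sqrt (min s (T n - s)))) ^ 3 := by
            gcongr
            exact bm_event_bound hd hW h0s hsT' hR0
        _ ≤ _ := by
            gcongr
            exact min_cube_bound h0s (by linarith) hR0
    -- step 9 : integrate the bound in time
    have hRHSmeas : Measurable fun s : ℝ =>
        ENNReal.ofReal M * (ENNReal.ofReal ((4*R)^3)
            * (ENNReal.ofReal (((Real.sqrt s)⁻¹) ^ 3)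
              + ENNReal.ofReal (((Real.sqrt (T n - s))⁻¹) ^ 3))) := by
      have hb1 : Measurable fun s : ℝ => ENNReal.ofReal (((Real.sqrt s)⁻¹) ^ 3) :=
        ((Real.continuous_sqrt.measurable.inv).pow_const 3).ennreal_ofReal
      have hb2 : Measurable fun s : ℝ => ENNReal.ofReal (((Real.sqrt (T n - s))⁻¹) ^ 3) := by
        have : Measurable fun s : ℝ => T n - s := measurable_const.sub measurable_id
        exact (((Real.continuous_sqrt.measurable.comp this).inv).pow_const 3).ennreal_ofReal
      exact ((hb1.add hb2).const_mul _).const_mul _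
    have hint2 : (∫⁻ s in J, ∫⁻ ω, G (s, ω) ∂P)
        ≤ ENNReal.ofReal M * (ENNReal.ofReal ((4*R)^3)
            * ENNReal.ofReal (4 * (m n) ^ (-(1:ℝ)/2))) := by
      calc (∫⁻ s in J, ∫⁻ ω, G (s, ω) ∂P)
          ≤ ∫⁻ s in J, ENNReal.ofReal M * (ENNReal.ofReal ((4*R)^3)
              * (ENNReal.ofReal (((Real.sqrt s)⁻¹) ^ 3)
                + ENNReal.ofReal (((Real.sqrt (T n - s))⁻¹) ^ 3))) :=
            setLIntegral_mono hRHSmeas hper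
        _ = ENNReal.ofReal M * (ENNReal.ofReal ((4*R)^3)
              * ∫⁻ s in J, (ENNReal.ofReal (((Real.sqrt s)⁻¹) ^ 3)
                + ENNReal.ofReal (((Real.sqrt (T n - s))⁻¹) ^ 3))) := by
            rw [lintegral_const_mul' _ _ ENNReal.ofReal_ne_top,
              lintegral_const_mul' _ _ ENNReal.ofReal_ne_top]
        _ ≤ _ := by
            gcongr
            exact time_int_bound hm0 hmTm
    -- combine
    calc P {ω | a < ∫ s in J, V (Real.sqrt 2 • (W s ω - (s / T n) • W (T n) ω))}
        ≤ P {ω | ENNReal.ofReal a ≤ ∫⁻ s in J, g s ω} := measure_mono hsub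
      _ = P {ω | ENNReal.ofReal a ≤ F' ω} := hcong
      _ ≤ (∫⁻ ω, F' ω ∂P) / ENNReal.ofReal a := hmarkov
      _ ≤ (ENNReal.ofReal M * (ENNReal.ofReal ((4*R)^3)
            * ENNReal.ofReal (4 * (m n) ^ (-(1:ℝ)/2)))) / ENNReal.ofReal a := by
          gcongr
          rw [hswap]
          exact hint2
      _ = ENNReal.ofReal (M * ((4*R)^3 * (4 * (m n) ^ (-(1:ℝ)/2)))) / ENNReal.ofReal a := by
          rw [← ENNReal.ofReal_mul (show (0:ℝ) ≤ (4*R)^3 by positivity),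
            ← ENNReal.ofReal_mul hM0]
  -- conclude by squeezing
  have hnum : Tendsto (fun n => ENNReal.ofReal (M * ((4*R)^3 * (4 * (m n) ^ (-(1:ℝ)/2)))))
      atTop (nhds 0) := by
    have h1 : Tendsto (fun x : ℝ => x ^ (-(1:ℝ)/2)) atTop (nhds 0) := by
      have := tendsto_rpow_neg_atTop (y := (1:ℝ)/2) (by norm_num)
      simpa [neg_div] using this
    have h2 : Tendsto (fun n => (m n) ^ (-(1:ℝ)/2)) atTop (nhds 0) := h1.comp hm
    have h3 : Tendsto (fun n => M * ((4*R)^3 * (4 * (m n) ^ (-(1:ℝ)/2)))) atTop (nhds 0) := by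
      have := ((h2.const_mul 4).const_mul ((4*R)^3)).const_mul M
      simpa using this
    have h4 := ENNReal.tendsto_ofReal h3
    simpa using h4
  have hbnd : Tendsto (fun n =>
      ENNReal.ofReal (M * ((4*R)^3 * (4 * (m n) ^ (-(1:ℝ)/2)))) / ENNReal.ofReal a)
      atTop (nhds 0) := by
    have hane : ENNReal.ofReal a ≠ 0 := by
      simp [ENNReal.ofReal_eq_zero, not_le, ha]
    have hinv : (ENNReal.ofReal a)⁻¹ ≠ ∞ := by
      simp [ENNReal.inv_ne_top, hane]
    simp only [div_eq_mul_inv]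
    have hmc := ENNReal.Tendsto.mul_const hnum (Or.inr hinv)
    simp only [zero_mul] at hmc
    exact hmc
  refine tendsto_of_tendsto_of_tendsto_of_le_of_le' tendsto_const_nhds hbnd ?_ ?_
  · exact Eventually.of_forall fun n => zero_le
  · filter_upwards [hm.eventually_ge_atTop 1] with n hn
    exact hspec n hn

end
end

section
/- Lipschitz-type lower bound for the free energy in the Gaussian variables: let (Ω, 𝒜, μ) be a probability space, N ≥ 1, β > 0, and let ψ: Ω → ℝ^N be a bounded measurable map. For ξ ∈ ℝ^N define Z(ξ) := ∫_Ω exp(β⟨ψ(ω), ξ⟩ − (β²/2)|ψ(ω)|²) dμ(ω) and the tilted probability measure dμ̂_ξ := Z(ξ)^{−1} exp(β⟨ψ(·), ξ⟩ − (β²/2)|ψ(·)|²) dμ. Then for all ξ, ξ' ∈ ℝ^N, log Z(ξ) − log Z(ξ') ≥ −β · (∫_Ω ∫_Ω ⟨ψ(ω), ψ(ω')⟩ dμ̂_{ξ'}(ω) dμ̂_{ξ'}(ω'))^{1/2} · |ξ − ξ'|, where the double integral is nonnegative and |·| denotes the Euclidean norm on ℝ^N. -/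
open MeasureTheory ProbabilityTheory Filter ENNReal

noncomputable section

private lemma integrable_of_bdd {Ω : Type*} {E : Type*} [MeasurableSpace Ω]
    {μ : Measure Ω} [IsFiniteMeasure μ] [NormedAddCommGroup E] {h : Ω → E}
    (hm : AEStronglyMeasurable h μ) (C : ℝ) (hb : ∀ ω, ‖h ω‖ ≤ C) :
    Integrable h μ :=
  (integrable_const C).mono' hm (Filter.Eventually.of_forall hb)

/-- **Lipschitz-type lower bound for the free energy in the Gaussian variables**: for a
probability space `(Ω, μ)`, `β > 0` and a bounded measurable `ψ : Ω → ℝ^N`, with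
`Z(ξ) = ∫ exp (β⟨ψ, ξ⟩ − (β²/2)|ψ|²) dμ` and tilted measure
`dμ̂_ξ = Z(ξ)⁻¹ exp (β⟨ψ, ξ⟩ − (β²/2)|ψ|²) dμ`, one has for all `ξ, ξ'`,
`log Z(ξ) − log Z(ξ') ≥ −β (∫∫ ⟨ψ(ω), ψ(ω')⟩ dμ̂_{ξ'} dμ̂_{ξ'})^{1/2} |ξ − ξ'|`,
the double integral being nonnegative. -/
theorem free_energy_lipschitz_lower_bound {Ω : Type*} [MeasurableSpace Ω]
    (μ : Measure Ω) [IsProbabilityMeasure μ]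
    (N : ℕ) (hN : 1 ≤ N) (β : ℝ) (hβ : 0 < β)
    (ψ : Ω → EuclideanSpace ℝ (Fin N))
    (hψ_meas : Measurable ψ) (hψ_bdd : ∃ M : ℝ, ∀ ω, ‖ψ ω‖ ≤ M)
    (Z : EuclideanSpace ℝ (Fin N) → ℝ)
    (hZ : Z = fun ξ => ∫ ω, Real.exp (β * (inner ℝ (ψ ω) ξ : ℝ) - β ^ 2 / 2 * ‖ψ ω‖ ^ 2) ∂μ)
    (μhat : EuclideanSpace ℝ (Fin N) → Measure Ω)
    (hμhat : μhat = fun ξ => μ.withDensity fun ω =>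
      ENNReal.ofReal ((Z ξ)⁻¹ * Real.exp (β * (inner ℝ (ψ ω) ξ : ℝ) - β ^ 2 / 2 * ‖ψ ω‖ ^ 2))) :
    ∀ ξ ξ' : EuclideanSpace ℝ (Fin N),
      (0 ≤ ∫ ω, ∫ ω', (inner ℝ (ψ ω) (ψ ω') : ℝ) ∂(μhat ξ') ∂(μhat ξ')) ∧
      Real.log (Z ξ) - Real.log (Z ξ') ≥
        -β * Real.sqrt (∫ ω, ∫ ω', (inner ℝ (ψ ω) (ψ ω') : ℝ) ∂(μhat ξ') ∂(μhat ξ'))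
          * ‖ξ - ξ'‖ := by
  intro ξ ξ'
  obtain ⟨M₀, hM₀⟩ := hψ_bdd
  set M : ℝ := max M₀ 0 with hM
  have hMnn : 0 ≤ M := le_max_right _ _
  have hψM : ∀ ω, ‖ψ ω‖ ≤ M := fun ω => le_trans (hM₀ ω) (le_max_left _ _)
  -- the exponent defining `Z ξ'` and the relative exponent
  set g : Ω → ℝ := fun ω => β * (inner ℝ (ψ ω) ξ' : ℝ) - β ^ 2 / 2 * ‖ψ ω‖ ^ 2 with hg
  set f : Ω → ℝ := fun ω => β * (inner ℝ (ψ ω) (ξ - ξ') : ℝ) with hf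
  have hg_meas : Measurable g :=
    (measurable_const.mul (hψ_meas.inner measurable_const)).sub
      (measurable_const.mul (hψ_meas.norm.pow measurable_const))
  have hf_meas : Measurable f :=
    measurable_const.mul (hψ_meas.inner measurable_const)
  -- bounds
  set Cg : ℝ := β * (M * ‖ξ'‖) + β ^ 2 / 2 * M ^ 2 with hCg
  set Cf : ℝ := β * (M * ‖ξ - ξ'‖) with hCf
  have hg_bdd : ∀ ω, |g ω| ≤ Cg := by
    intro ω
    have h1 : |β * (inner ℝ (ψ ω) ξ' : ℝ)| ≤ β * (M * ‖ξ'‖) := by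
      rw [abs_mul, abs_of_pos hβ]
      have := abs_real_inner_le_norm (ψ ω) ξ'
      have h2 : ‖ψ ω‖ * ‖ξ'‖ ≤ M * ‖ξ'‖ :=
        mul_le_mul_of_nonneg_right (hψM ω) (norm_nonneg _)
      exact mul_le_mul_of_nonneg_left (this.trans h2) hβ.le
    have h2 : |β ^ 2 / 2 * ‖ψ ω‖ ^ 2| ≤ β ^ 2 / 2 * M ^ 2 := by
      rw [abs_mul]
      have hb2 : (0:ℝ) ≤ β ^ 2 / 2 := by positivity
      rw [abs_of_nonneg hb2, abs_of_nonneg (by positivity : (0:ℝ) ≤ ‖ψ ω‖ ^ 2)]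
      exact mul_le_mul_of_nonneg_left (by
        have := hψM ω; nlinarith [norm_nonneg (ψ ω)]) hb2
    calc |g ω| ≤ |β * (inner ℝ (ψ ω) ξ' : ℝ)| + |β ^ 2 / 2 * ‖ψ ω‖ ^ 2| := abs_sub _ _
      _ ≤ Cg := add_le_add h1 h2
  have hf_bdd : ∀ ω, |f ω| ≤ Cf := by
    intro ω
    rw [hf, abs_mul, abs_of_pos hβ]
    have := abs_real_inner_le_norm (ψ ω) (ξ - ξ')
    have h2 : ‖ψ ω‖ * ‖ξ - ξ'‖ ≤ M * ‖ξ - ξ'‖ :=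
      mul_le_mul_of_nonneg_right (hψM ω) (norm_nonneg _)
    exact mul_le_mul_of_nonneg_left (this.trans h2) hβ.le
  -- integrability of exp g, exp (f + g)
  have hexpg_int : Integrable (fun ω => Real.exp (g ω)) μ :=
    integrable_of_bdd ((Real.measurable_exp.comp hg_meas)).aestronglyMeasurable
      (Real.exp Cg) (fun ω => by
        rw [Real.norm_eq_abs, abs_of_pos (Real.exp_pos _)]
        exact Real.exp_le_exp.2 ((abs_le.1 (hg_bdd ω)).2))
  -- Z ξ' is positive
  have hZξ' : Z ξ' = ∫ ω, Real.exp (g ω) ∂μ := by rw [hZ]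
  have hZpos : 0 < Z ξ' := by
    have hlb : Real.exp (-Cg) ≤ Z ξ' := by
      rw [hZξ']
      have : Real.exp (-Cg) = ∫ _ : Ω, Real.exp (-Cg) ∂μ := by simp
      rw [this]
      refine integral_mono (integrable_const _) hexpg_int fun ω => ?_
      exact Real.exp_le_exp.2 ((abs_le.1 (hg_bdd ω)).1)
    exact lt_of_lt_of_le (Real.exp_pos _) hlb
  -- density
  set d : Ω → ℝ := fun ω => (Z ξ')⁻¹ * Real.exp (g ω) with hd
  have hd_meas : Measurable d := measurable_const.mul (Real.measurable_exp.comp hg_meas)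
  have hd_nn : ∀ ω, 0 ≤ d ω := fun ω => by positivity
  set D : ℝ := (Z ξ')⁻¹ * Real.exp Cg with hD
  have hDnn : 0 ≤ D := by positivity
  have hd_bdd : ∀ ω, d ω ≤ D := fun ω =>
    mul_le_mul_of_nonneg_left (Real.exp_le_exp.2 ((abs_le.1 (hg_bdd ω)).2))
      (inv_nonneg.2 hZpos.le)
  have hd_int : Integrable d μ :=
    integrable_of_bdd hd_meas.aestronglyMeasurable D fun ω => by
      rw [Real.norm_eq_abs, abs_of_nonneg (hd_nn ω)]; exact hd_bdd ω
  have hd_int_one : ∫ ω, d ω ∂μ = 1 := by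
    rw [hd]
    simp only [integral_const_mul]
    rw [← hZξ', inv_mul_cancel₀ hZpos.ne']
  -- conversion of integrals against μhat ξ' to integrals against μ
  have key : ∀ (E : Type) (_ : NormedAddCommGroup E) (_ : NormedSpace ℝ E) (h : Ω → E),
      ∫ ω, h ω ∂(μhat ξ') = ∫ ω, d ω • h ω ∂μ := by
    intro E _ _ h
    have e1 : μhat ξ' = μ.withDensity fun ω => ((d ω).toNNReal : ℝ≥0∞) := by
      rw [hμhat]
      rfl
    rw [e1, integral_withDensity_eq_integral_smul (hd_meas.real_toNNReal) h]
    refine integral_congr_ae (Filter.Eventually.of_forall fun ω => ?_)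
    simp only [NNReal.smul_def, Real.coe_toNNReal _ (hd_nn ω)]
  -- the mean vector m
  set m : EuclideanSpace ℝ (Fin N) := ∫ ω, d ω • ψ ω ∂μ with hm
  have hdψ_int : Integrable (fun ω => d ω • ψ ω) μ := by
    refine integrable_of_bdd ((hd_meas.aestronglyMeasurable).smul
      hψ_meas.aestronglyMeasurable) (D * M) fun ω => ?_
    rw [norm_smul, Real.norm_eq_abs, abs_of_nonneg (hd_nn ω)]
    exact mul_le_mul (hd_bdd ω) (hψM ω) (norm_nonneg _)
      (hDnn)
  -- double integral equals ‖m‖²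
  have hAinner : (∫ ω, ∫ ω', (inner ℝ (ψ ω) (ψ ω') : ℝ) ∂(μhat ξ') ∂(μhat ξ'))
      = (inner ℝ m m : ℝ) := by
    have inner_eq : ∀ ω, (∫ ω', (inner ℝ (ψ ω) (ψ ω') : ℝ) ∂(μhat ξ')) = (inner ℝ (ψ ω) m : ℝ) := by
      intro ω
      rw [key ℝ _ _ _]
      have : ∀ ω', d ω' • (inner ℝ (ψ ω) (ψ ω') : ℝ) = (inner ℝ (ψ ω) (d ω' • ψ ω') : ℝ) := by
        intro ω'; rw [real_inner_smul_right]; simp [smul_eq_mul]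
      simp_rw [this]
      exact integral_inner hdψ_int (ψ ω)
    simp_rw [inner_eq]
    rw [key ℝ _ _ _]
    have : ∀ ω, d ω • (inner ℝ (ψ ω) m : ℝ) = (inner ℝ m (d ω • ψ ω) : ℝ) := by
      intro ω; rw [real_inner_smul_right, real_inner_comm]; simp [smul_eq_mul]
    simp_rw [this]
    exact integral_inner hdψ_int m
  have hA_nonneg : 0 ≤ ∫ ω, ∫ ω', (inner ℝ (ψ ω) (ψ ω') : ℝ) ∂(μhat ξ') ∂(μhat ξ') := by
    rw [hAinner]; exact real_inner_self_nonneg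
  refine ⟨hA_nonneg, ?_⟩
  have hsqrtA : Real.sqrt (∫ ω, ∫ ω', (inner ℝ (ψ ω) (ψ ω') : ℝ) ∂(μhat ξ') ∂(μhat ξ')) = ‖m‖ := by
    rw [hAinner, real_inner_self_eq_norm_sq, Real.sqrt_sq (norm_nonneg _)]
  rw [hsqrtA]
  -- c = ∫ f dν = β ⟪m, ξ - ξ'⟫
  set c : ℝ := β * (inner ℝ m (ξ - ξ') : ℝ) with hc
  have hdf_int : Integrable (fun ω => d ω * f ω) μ := by
    refine integrable_of_bdd ((hd_meas.mul hf_meas)).aestronglyMeasurable (D * Cf) fun ω => ?_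
    rw [Real.norm_eq_abs, abs_mul, abs_of_nonneg (hd_nn ω)]
    exact mul_le_mul (hd_bdd ω) (hf_bdd ω) (abs_nonneg _) (hDnn)
  have hcint : ∫ ω, d ω * f ω ∂μ = c := by
    have : ∀ ω, d ω * f ω = β * (inner ℝ (ξ - ξ') (d ω • ψ ω) : ℝ) := by
      intro ω
      rw [real_inner_smul_right, hf]
      rw [real_inner_comm]
      ring
    simp_rw [this]
    rw [integral_const_mul, integral_inner hdψ_int (ξ - ξ'), hc, real_inner_comm]
  -- Z ξ = Z ξ' * ∫ d · exp f dμ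
  have hfg : ∀ ω, β * (inner ℝ (ψ ω) ξ : ℝ) - β ^ 2 / 2 * ‖ψ ω‖ ^ 2 = f ω + g ω := by
    intro ω
    simp only [hf, hg, inner_sub_right]
    ring
  have hZξ : Z ξ = Z ξ' * ∫ ω, d ω * Real.exp (f ω) ∂μ := by
    rw [← integral_const_mul]
    have h1 : ∀ ω, Z ξ' * (d ω * Real.exp (f ω)) = Real.exp (f ω + g ω) := by
      intro ω
      simp only [hd]
      rw [Real.exp_add, ← mul_assoc, ← mul_assoc, mul_inv_cancel₀ hZpos.ne', one_mul, mul_comm]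
    simp_rw [h1]
    simp only [hZ]
    exact integral_congr_ae (Filter.Eventually.of_forall fun ω => by simp only [hfg ω])
  -- key inequality : ∫ d exp f ≥ exp c
  have hdef_int : Integrable (fun ω => d ω * Real.exp (f ω)) μ := by
    refine integrable_of_bdd ((hd_meas.mul (Real.measurable_exp.comp hf_meas))).aestronglyMeasurable
      (D * Real.exp Cf) fun ω => ?_
    rw [Real.norm_eq_abs, abs_mul, abs_of_nonneg (hd_nn ω),
      abs_of_pos (Real.exp_pos _)]
    exact mul_le_mul (hd_bdd ω) (Real.exp_le_exp.2 ((abs_le.1 (hf_bdd ω)).2))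
      (Real.exp_pos _).le (hDnn)
  have hE_ge : Real.exp c ≤ ∫ ω, d ω * Real.exp (f ω) ∂μ := by
    have hpt : ∀ ω, d ω * (Real.exp c * (1 + (f ω - c))) ≤ d ω * Real.exp (f ω) := by
      intro ω
      refine mul_le_mul_of_nonneg_left ?_ (hd_nn ω)
      have h1 : 1 + (f ω - c) ≤ Real.exp (f ω - c) := by
        have := Real.add_one_le_exp (f ω - c); linarith
      calc Real.exp c * (1 + (f ω - c)) ≤ Real.exp c * Real.exp (f ω - c) :=
            mul_le_mul_of_nonneg_left h1 (Real.exp_pos _).le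
        _ = Real.exp (f ω) := by rw [← Real.exp_add]; ring_nf
    have hlhs_int : Integrable (fun ω => d ω * (Real.exp c * (1 + (f ω - c)))) μ := by
      refine integrable_of_bdd ((hd_meas.mul (measurable_const.mul
        ((measurable_const.add (hf_meas.sub measurable_const)))))).aestronglyMeasurable
        (D * (Real.exp c * (1 + Cf + |c|))) fun ω => ?_
      rw [Real.norm_eq_abs, abs_mul, abs_of_nonneg (hd_nn ω), abs_mul,
        abs_of_pos (Real.exp_pos _)]
      refine mul_le_mul (hd_bdd ω) (mul_le_mul_of_nonneg_left ?_ (Real.exp_pos _).le)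
        (by positivity) hDnn
      calc |1 + (f ω - c)| ≤ |1 + f ω| + |c| := by
            have he : 1 + (f ω - c) = (1 + f ω) + (-c) := by ring
            rw [he]
            simpa using abs_add_le (1 + f ω) (-c)
        _ ≤ 1 + |f ω| + |c| := by
            have := abs_add_le (1:ℝ) (f ω); simp only [abs_one] at this; linarith
        _ ≤ 1 + Cf + |c| := by have := hf_bdd ω; linarith
    have hmono := integral_mono hlhs_int hdef_int hpt
    have hcomp : ∫ ω, d ω * (Real.exp c * (1 + (f ω - c))) ∂μ = Real.exp c := by
      have : ∀ ω, d ω * (Real.exp c * (1 + (f ω - c))) =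
          Real.exp c * ((1 - c) * d ω + d ω * f ω) := by intro ω; ring
      simp_rw [this]
      rw [integral_const_mul, integral_add ((hd_int.const_mul _)) hdf_int,
        integral_const_mul, hd_int_one, hcint]
      ring
    rw [hcomp] at hmono
    exact hmono
  -- conclude with logs
  have hZξpos : 0 < Z ξ := by
    rw [hZξ]
    exact mul_pos hZpos (lt_of_lt_of_le (Real.exp_pos c) hE_ge)
  have hlog : Real.log (Z ξ') + c ≤ Real.log (Z ξ) := by
    have h1 : Z ξ' * Real.exp c ≤ Z ξ := by
      rw [hZξ]
      exact mul_le_mul_of_nonneg_left hE_ge hZpos.le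
    have h2 : Real.log (Z ξ' * Real.exp c) ≤ Real.log (Z ξ) :=
      Real.log_le_log (mul_pos hZpos (Real.exp_pos c)) h1
    rwa [Real.log_mul hZpos.ne' (Real.exp_pos c).ne', Real.log_exp] at h2
  have hCS : -(‖m‖ * ‖ξ - ξ'‖) ≤ (inner ℝ m (ξ - ξ') : ℝ) := by
    have := abs_real_inner_le_norm m (ξ - ξ')
    have := neg_abs_le (inner ℝ m (ξ - ξ') : ℝ)
    linarith [abs_real_inner_le_norm m (ξ - ξ'), neg_abs_le (inner ℝ m (ξ - ξ') : ℝ)]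
  have hfinal : -β * ‖m‖ * ‖ξ - ξ'‖ ≤ c := by
    rw [hc]
    nlinarith [hCS, hβ.le]
  have : -β * ‖m‖ * ‖ξ - ξ'‖ ≤ Real.log (Z ξ) - Real.log (Z ξ') := by
    linarith
  exact this

end
end
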